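/- Let p, q, m be positive integers and let p_1, …, p_m, q_1, …, q_m be positive integers with p_1 + … + p_m ≤ p − 1 and q_1 + … + q_m ≤ q − 1. Then p_1 q_1 + … + p_m q_m ≤ (p − m)(q − m) + (m − 1). -/
import Mathlib

/-- if `p_1, …, p_m, q_1, …, q_m` are positive integers with
`Σ p_i ≤ p - 1` and `Σ q_i ≤ q - 1`, then
`Σ p_i q_i ≤ (p - m)(q - m) + (m - 1)`. -/
theorem stmt_11 (p q m : ℕ) (hp : 0 < p) (hq : 0 < q) (hm : 0 < m)
    (P Q : Fin m → ℕ) (hP : ∀ k, 1 ≤ P k) (hQ : ∀ k, 1 ≤ Q k)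
    (hPsum : (∑ k, P k) ≤ p - 1) (hQsum : (∑ k, Q k) ≤ q - 1) :
    (∑ k, P k * Q k) ≤ (p - m) * (q - m) + (m - 1) := by
  have hPa : ∀ k, P k = (P k - 1) + 1 := fun k => (Nat.sub_add_cancel (hP k)).symm
  have hQb : ∀ k, Q k = (Q k - 1) + 1 := fun k => (Nat.sub_add_cancel (hQ k)).symm
  set A := ∑ k, (P k - 1) with hAdef
  set B := ∑ k, (Q k - 1) with hBdef
  have hA : (∑ k, P k) = A + m := by
    calc (∑ k, P k) = ∑ k, ((P k - 1) + 1) := Finset.sum_congr rfl fun k _ => hPa k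
      _ = A + m := by rw [Finset.sum_add_distrib]; simp [hAdef]
  have hB : (∑ k, Q k) = B + m := by
    calc (∑ k, Q k) = ∑ k, ((Q k - 1) + 1) := Finset.sum_congr rfl fun k _ => hQb k
      _ = B + m := by rw [Finset.sum_add_distrib]; simp [hBdef]
  have hAp : A + 1 ≤ p - m := by omega
  have hBq : B + 1 ≤ q - m := by omega
  have key : ∑ k, (P k - 1) * (Q k - 1) ≤ A * B := by
    calc ∑ k, (P k - 1) * (Q k - 1) ≤ ∑ k, (P k - 1) * B :=
          Finset.sum_le_sum fun k _ => Nat.mul_le_mul le_rfl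
            (Finset.single_le_sum (f := fun i => Q i - 1) (fun i _ => Nat.zero_le _) (Finset.mem_univ k))
      _ = A * B := by rw [← Finset.sum_mul]
  have hsum : (∑ k, P k * Q k) = (∑ k, (P k - 1) * (Q k - 1)) + A + B + m := by
    have : ∀ k : Fin m, P k * Q k = (P k - 1) * (Q k - 1) + (P k - 1) + (Q k - 1) + 1 := by
      intro k
      obtain ⟨x, hx⟩ := Nat.exists_eq_add_of_le (hP k)
      obtain ⟨y, hy⟩ := Nat.exists_eq_add_of_le (hQ k)
      rw [hx, hy]
      simp only [Nat.add_sub_cancel_left]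
      ring
    rw [Finset.sum_congr rfl fun k _ => this k]
    simp [Finset.sum_add_distrib, hAdef, hBdef]
  have hmul : (A + 1) * (B + 1) ≤ (p - m) * (q - m) := Nat.mul_le_mul hAp hBq
  calc (∑ k, P k * Q k) = (∑ k, (P k - 1) * (Q k - 1)) + A + B + m := hsum
    _ ≤ A * B + A + B + m := by omega
    _ = (A + 1) * (B + 1) + (m - 1) := by cases m with | zero => omega | succ n => ring_nf; omega
    _ ≤ (p - m) * (q - m) + (m - 1) := by omega
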